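/- In the quantum shuffle algebra (F, ⋆) with parameters q_{ij}, for any i ≠ j and integers m, l ≥ 0: w_i^{⋆m} ⋆ w_j ⋆ w_i^{⋆l} = ∑_{k=0}^m ∑_{t=0}^l q_{ij}^k q_{ji}^{l-t} q_{ii}^{k(l-t)} binom(m,k)_{q_{ii}} binom(l,t)_{q_{ii}} (m-k+l-t)_{q_{ii}}! (k+t)_{q_{ii}}! · w_i^{m-k+l-t} w_j w_i^{k+t}, where products without ⋆ denote concatenation. -/

import Mathlib

set_option linter.unusedSectionVars false


/-- The free associative algebra `F` on generators `w_i` (`i ∈ I`), realized as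
the monoid algebra of the free monoid on `I` (words = lists). -/
abbrev FA (K I : Type*) [Field K] : Type _ := MonoidAlgebra K (FreeMonoid I)

variable {K I : Type*} [Field K] [Fintype I] [DecidableEq I]

/-- The generator `w_i` of the free algebra. -/
noncomputable def wgen (K : Type*) [Field K] {I : Type*} (i : I) : FA K I :=
  MonoidAlgebra.single (FreeMonoid.of i) 1

/-- `q_{α_i, ν}` where `ν` is the degree of the word `w` (here `w` is a list of
letters, and the degree records the number of occurrences of each letter). -/
noncomputable def qrow (qm : I → I → K) (i : I) (w : List I) : K :=
  ∏ k : I, qm i k ^ (w.count k)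

/-- Auxiliary recursion for the quantum shuffle product of two basis words;
the arguments are the *reversed* words. It implements
`(x w_i) ⋆ (y w_j) = (x w_i ⋆ y) w_j + q_{α_i, ν+α_j} (x ⋆ y w_j) w_i`. -/
noncomputable def shAux (qm : I → I → K) : List I → List I → FA K I
  | [], b => MonoidAlgebra.single (FreeMonoid.ofList b.reverse) 1
  | a, [] => MonoidAlgebra.single (FreeMonoid.ofList a.reverse) 1
  | i :: a', j :: b' =>
      shAux qm (i :: a') b' * MonoidAlgebra.single (FreeMonoid.of j) 1
        + (qrow qm i b' * qm i j) •
            (shAux qm a' (j :: b') * MonoidAlgebra.single (FreeMonoid.of i) 1)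
  termination_by a b => a.length + b.length

/-- The quantum shuffle product `⋆` on the free algebra, extended bilinearly
from basis words. -/
noncomputable def shuffle (qm : I → I → K) (x y : FA K I) : FA K I :=
  Finsupp.sum x.coeff fun a ca =>
    Finsupp.sum y.coeff fun b cb =>
      (ca * cb) • shAux qm (FreeMonoid.toList a).reverse (FreeMonoid.toList b).reverse

/-- The `m`-fold quantum shuffle power `w_i^{⋆m}`. -/
noncomputable def starPow (qm : I → I → K) (i : I) : ℕ → FA K I
  | 0 => 1
  | n + 1 => shuffle qm (starPow qm i n) (wgen K i)

/-- The `t`-integer `(n)_t = 1 + t + ⋯ + t^{n-1}`. -/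
noncomputable def qint (t : K) (n : ℕ) : K := ∑ i ∈ Finset.range n, t ^ i

/-- The `t`-factorial `(m)_t! = ∏_{k=1}^m (k)_t`. -/
noncomputable def qfact (t : K) (m : ℕ) : K := ∏ k ∈ Finset.range m, qint t (k + 1)

/-- The Gaussian binomial coefficient `binom(n,k)_t`, via the Pascal recursion
`binom(n,k)_t = t^k binom(n-1,k)_t + binom(n-1,k-1)_t`; it agrees with
`(n)_t!/((k)_t!(n-k)_t!)` whenever the latter is defined. -/
noncomputable def qbinom (t : K) : ℕ → ℕ → K
  | _, 0 => 1
  | 0, _ + 1 => 0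
  | n + 1, k + 1 => t ^ (k + 1) * qbinom t n (k + 1) + qbinom t n k


lemma qbinom_zero (t : K) (n : ℕ) : qbinom t n 0 = 1 := by cases n <;> rfl

lemma qbinom_succ (t : K) (n k : ℕ) :
    qbinom t (n+1) (k+1) = t ^ (k+1) * qbinom t n (k+1) + qbinom t n k := rfl

lemma qbinom_of_lt (t : K) : ∀ n k : ℕ, n < k → qbinom t n k = 0 := by
  intro n
  induction n with
  | zero => intro k hk; match k, hk with | k+1, _ => rfl
  | succ n ih =>
      intro k hk
      match k, hk with
      | k+1, hk =>
        rw [qbinom_succ, ih _ (by omega), ih _ (by omega)]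
        ring

lemma qbinom_self (t : K) (n : ℕ) : qbinom t n n = 1 := by
  induction n with
  | zero => rfl
  | succ n ih => rw [qbinom_succ, ih, qbinom_of_lt t n (n+1) (by omega)]; ring

lemma qint_succ' (t : K) (n : ℕ) : qint t (n+1) = 1 + t * qint t n := by
  unfold qint
  rw [Finset.sum_range_succ']
  simp [Finset.mul_sum, pow_succ, mul_comm, add_comm]

lemma qint_add (t : K) (a b : ℕ) : qint t (a+b) = qint t a + t ^ a * qint t b := by
  unfold qint
  rw [Finset.sum_range_add, Finset.mul_sum]
  simp [pow_add]

lemma qfact_succ (t : K) (n : ℕ) : qfact t (n+1) = qfact t n * qint t (n+1) :=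
  Finset.prod_range_succ _ _

lemma qbinom_one (t : K) (n : ℕ) : qbinom t n 1 = qint t n := by
  induction n with
  | zero => rfl
  | succ n ih => rw [qbinom_succ, ih, qbinom_zero, qint_succ']; ring

lemma qbinom_mul_qfact (t : K) : ∀ n k : ℕ, k ≤ n →
    qbinom t n k * qfact t k * qfact t (n - k) = qfact t n := by
  intro n
  induction n with
  | zero => intro k hk; interval_cases k; simp [qbinom_zero, qfact]
  | succ n ih =>
      intro k hk
      match k with
      | 0 => simp [qbinom_zero, qfact]
      | k+1 =>
        rcases Nat.lt_or_ge k n with h | h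
        · have h1 : qbinom t n (k+1) * qfact t (k+1) * qfact t (n - (k+1)) = qfact t n :=
            ih (k+1) (by omega)
          have h2 : qbinom t n k * qfact t k * qfact t (n - k) = qfact t n := ih k (by omega)
          have hnk : n - k = (n - (k+1)) + 1 := by omega
          have hs : n + 1 - (k+1) = n - k := by omega
          rw [qbinom_succ, hs, hnk, qfact_succ t (k), qfact_succ t n]
          rw [hnk, qfact_succ] at h2
          have key : qint t (n+1) = t ^ (k+1) * qint t (n - (k+1) + 1) + qint t (k+1) := by
            have : n + 1 = (k+1) + (n - (k+1) + 1) := by omega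
            rw [this, qint_add]; ring
          rw [qfact_succ t (n - (k+1)), key]
          rw [qfact_succ t k] at h1
          linear_combination (t^(k+1) * qint t (n - (k+1) + 1)) * h1 + qint t (k+1) * h2
        · have hk' : k = n := by omega
          subst hk'
          rw [qbinom_self]
          simp [Nat.sub_self, qfact]

/-- The basis word `i^n`. -/
noncomputable def repE (K : Type*) [Field K] {I : Type*} (i : I) (n : ℕ) : FA K I :=
  MonoidAlgebra.single (FreeMonoid.ofList (List.replicate n i)) 1

/-- The basis word `i^a j i^b`. -/
noncomputable def wW (K : Type*) [Field K] {I : Type*} (i j : I) (a b : ℕ) : FA K I :=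
  MonoidAlgebra.single
    (FreeMonoid.ofList (List.replicate a i ++ j :: List.replicate b i)) 1

lemma single_mul_of (u : List I) (c : I) :
    (MonoidAlgebra.single (FreeMonoid.ofList u) (1:K)) *
      MonoidAlgebra.single (FreeMonoid.of c) 1
    = MonoidAlgebra.single (FreeMonoid.ofList (u ++ [c])) 1 := by
  rw [MonoidAlgebra.single_mul_single, one_mul]
  rfl

lemma repE_mul (i : I) (n : ℕ) :
    repE K i n * MonoidAlgebra.single (FreeMonoid.of i) 1 = repE K i (n+1) := by
  rw [repE, single_mul_of, repE, ← List.replicate_succ']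

lemma repE_mul_j (i j : I) (n : ℕ) :
    repE K i n * MonoidAlgebra.single (FreeMonoid.of j) 1 = wW K i j n 0 := by
  rw [repE, single_mul_of, wW]
  norm_num

lemma wW_mul (i j : I) (a b : ℕ) :
    wW K i j a b * MonoidAlgebra.single (FreeMonoid.of i) 1 = wW K i j a (b+1) := by
  rw [wW, single_mul_of, wW]
  congr 2
  simp [List.replicate_succ']

lemma qrow_nil (qm : I → I → K) (x : I) : qrow qm x [] = 1 := by
  simp [qrow]

lemma qrow_replicate (qm : I → I → K) (x y : I) (n : ℕ) :
    qrow qm x (List.replicate n y) = qm x y ^ n := by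
  unfold qrow
  rw [Fintype.prod_eq_single y]
  · simp
  · intro z hz
    rw [List.count_replicate]
    simp [hz, Ne.symm hz]

lemma shAux_nil_left (qm : I → I → K) (b : List I) :
    shAux qm [] b = MonoidAlgebra.single (FreeMonoid.ofList b.reverse) 1 := by
  rw [shAux]

lemma shAux_nil_right (qm : I → I → K) (x : I) (a : List I) :
    shAux qm (x :: a) [] = MonoidAlgebra.single (FreeMonoid.ofList (x :: a).reverse) 1 := by
  rw [shAux]; simp

lemma shAux_cons (qm : I → I → K) (x y : I) (a b : List I) :
    shAux qm (x :: a) (y :: b) =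
      shAux qm (x :: a) b * MonoidAlgebra.single (FreeMonoid.of y) 1
        + (qrow qm x b * qm x y) •
            (shAux qm a (y :: b) * MonoidAlgebra.single (FreeMonoid.of x) 1) := by
  rw [shAux]

lemma shuffle_single_single (qm : I → I → K) (a b : FreeMonoid I) (c d : K) :
    shuffle qm (MonoidAlgebra.single a c) (MonoidAlgebra.single b d)
      = (c * d) • shAux qm (FreeMonoid.toList a).reverse (FreeMonoid.toList b).reverse := by
  unfold shuffle
  rw [MonoidAlgebra.coeff_single, MonoidAlgebra.coeff_single]
  rw [Finsupp.sum_single_index, Finsupp.sum_single_index]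
  · simp
  · rw [Finsupp.sum_single_index] <;> simp

lemma shuffle_zero_left (qm : I → I → K) (y : FA K I) : shuffle qm 0 y = 0 := by
  unfold shuffle
  exact Finsupp.sum_zero_index

lemma shuffle_add_left (qm : I → I → K) (x x' y : FA K I) :
    shuffle qm (x + x') y = shuffle qm x y + shuffle qm x' y := by
  unfold shuffle
  apply Finsupp.sum_add_index'
  · intro a; simp
  · intro a b₁ b₂
    rw [← Finsupp.sum_add]
    congr 1
    funext b cb
    rw [add_mul, add_smul]

lemma shuffle_smul_left (qm : I → I → K) (c : K) (x y : FA K I) :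
    shuffle qm (c • x) y = c • shuffle qm x y := by
  unfold shuffle
  rw [MonoidAlgebra.coeff_smul, Finsupp.sum_smul_index (by intro a; simp), Finsupp.smul_sum]
  apply Finsupp.sum_congr
  intro a _
  rw [Finsupp.smul_sum]
  apply Finsupp.sum_congr
  intro b _
  rw [mul_assoc, mul_smul]

lemma shuffle_smul_right (qm : I → I → K) (c : K) (x y : FA K I) :
    shuffle qm x (c • y) = c • shuffle qm x y := by
  unfold shuffle
  rw [Finsupp.smul_sum]
  apply Finsupp.sum_congr
  intro a _
  rw [MonoidAlgebra.coeff_smul, Finsupp.sum_smul_index (by intro b; simp), Finsupp.smul_sum]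
  apply Finsupp.sum_congr
  intro b _
  rw [mul_left_comm]
  rw [mul_smul, mul_smul]

lemma shuffle_sum_left {γ : Type*} (qm : I → I → K) (s : Finset γ) (f : γ → FA K I)
    (y : FA K I) :
    shuffle qm (∑ g ∈ s, f g) y = ∑ g ∈ s, shuffle qm (f g) y := by
  classical
  induction s using Finset.induction_on with
  | empty => simp [shuffle_zero_left]
  | insert a s h ih => rw [Finset.sum_insert h, Finset.sum_insert h, shuffle_add_left, ih]

lemma shAux_pure (qm : I → I → K) (i : I) : ∀ a l : ℕ,
    shAux qm (List.replicate a i) (List.replicate l i)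
      = qbinom (qm i i) (a+l) l • repE K i (a+l) := by
  intro a
  induction a with
  | zero =>
      intro l
      rw [List.replicate_zero, shAux_nil_left, List.reverse_replicate]
      rw [Nat.zero_add, qbinom_self, repE, one_smul]
  | succ a IH =>
      intro l
      induction l with
      | zero =>
          rw [List.replicate_zero, List.replicate_succ, shAux_nil_right,
              ← List.replicate_succ, List.reverse_replicate]
          rw [Nat.add_zero, qbinom_zero, repE, one_smul]
      | succ l IHl =>
          have ra : List.replicate (a+1) i = i :: List.replicate a i := rfl
          have rl : List.replicate (l+1) i = i :: List.replicate l i := rfl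
          rw [ra, rl, shAux_cons, ← ra, ← rl]
          rw [IHl, IH (l+1), qrow_replicate]
          simp only [smul_mul_assoc, repE_mul]
          have e1 : a + 1 + l + 1 = a + 1 + (l + 1) := by omega
          have e2 : a + (l + 1) + 1 = a + 1 + (l + 1) := by omega
          have e3 : a + (l + 1) = a + 1 + l := by omega
          rw [e1, e2, e3, smul_smul]
          have e4 : a + 1 + (l + 1) = (a + 1 + l) + 1 := by omega
          rw [e4, qbinom_succ, add_smul]
          rw [add_comm]
          congr 2
          rw [← pow_succ]

lemma shAux_mjl (qm : I → I → K) (i j : I) : ∀ m : ℕ,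
    shAux qm (List.replicate m i) [j]
      = ∑ k ∈ Finset.range (m+1), (qm i j) ^ k • wW K i j (m-k) k := by
  intro m
  induction m with
  | zero =>
      rw [List.replicate_zero, shAux_nil_left]
      simp [wW]
  | succ m IH =>
      have rm : List.replicate (m+1) i = i :: List.replicate m i := rfl
      rw [rm, show ([j] : List I) = j :: [] from rfl, shAux_cons, shAux_nil_right,
          ← rm, List.reverse_replicate, qrow_nil, one_mul]
      rw [show MonoidAlgebra.single (FreeMonoid.ofList (List.replicate (m+1) i)) (1:K)
            = repE K i (m+1) from rfl, repE_mul_j, IH]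
      rw [Finset.sum_range_succ' _ (m+1)]
      simp only [Nat.succ_sub_succ]
      rw [Finset.sum_mul, Finset.smul_sum]
      simp only [smul_mul_assoc, wW_mul, smul_smul, pow_zero, one_smul, Nat.sub_zero]
      rw [add_comm]
      congr 1
      apply Finset.sum_congr rfl
      intro k _
      congr 1
      rw [pow_succ, mul_comm]

lemma shAux_main (qm : I → I → K) (i j : I) : ∀ b l a : ℕ,
    shAux qm (List.replicate b i ++ j :: List.replicate a i) (List.replicate l i)
      = ∑ t ∈ Finset.range (l+1),
          (qm j i ^ (l-t) * qm i i ^ (b*(l-t)) * qbinom (qm i i) (b+t) t *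
             qbinom (qm i i) (a+(l-t)) (l-t)) • wW K i j (a+(l-t)) (b+t) := by
  intro b
  induction b with
  | zero =>
      intro l a
      induction l with
      | zero =>
          rw [List.replicate_zero, List.nil_append, shAux_nil_right]
          simp [List.reverse_replicate, qbinom_zero, wW]
      | succ l IHl =>
          rw [List.replicate_zero, List.nil_append] at IHl ⊢
          have rl : List.replicate (l+1) i = i :: List.replicate l i := rfl
          rw [rl, shAux_cons, ← rl, IHl, shAux_pure qm i a (l+1), qrow_replicate]
          simp only [Finset.sum_mul, smul_mul_assoc, wW_mul, repE_mul_j, smul_smul]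
          rw [Finset.sum_range_succ' _ (l+1)]
          simp only [Nat.succ_sub_succ, Nat.sub_zero, Nat.zero_add, Nat.zero_mul, pow_zero,
            qbinom_self, qbinom_zero, one_mul, mul_one, Nat.add_zero]
          congr 1
          congr 1
          ring
  | succ b IHb =>
      intro l a
      induction l with
      | zero =>
          have rb : List.replicate (b+1) i ++ j :: List.replicate a i
              = i :: (List.replicate b i ++ j :: List.replicate a i) := rfl
          rw [List.replicate_zero, rb, shAux_nil_right]
          simp only [List.reverse_cons, List.reverse_append, List.reverse_replicate]
          rw [Finset.sum_range_one]
          simp only [Nat.sub_zero, Nat.mul_zero, Nat.add_zero, pow_zero, qbinom_zero,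
            one_mul, mul_one, one_smul]
          show MonoidAlgebra.single
              (FreeMonoid.ofList ((List.replicate a i ++ [j]) ++ List.replicate b i ++ [i]))
              (1:K) = _
          rw [wW]
          congr 2
          simp [List.replicate_succ', List.append_assoc]
      | succ l IHl =>
          have rb : List.replicate (b+1) i ++ j :: List.replicate a i
              = i :: (List.replicate b i ++ j :: List.replicate a i) := rfl
          have rl : List.replicate (l+1) i = i :: List.replicate l i := rfl
          rw [rb, rl, shAux_cons, ← rl, ← rb, IHl, IHb (l+1) a, qrow_replicate]
          simp only [Finset.sum_mul, smul_mul_assoc, wW_mul, Finset.smul_sum, smul_smul]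
          rw [Finset.sum_range_succ' _ (l+1), Finset.sum_range_succ'
            (fun t => (qm j i ^ (l+1-t) * qm i i ^ ((b+1)*(l+1-t)) * qbinom (qm i i) (b+1+t) t *
             qbinom (qm i i) (a+(l+1-t)) (l+1-t)) • wW K i j (a+(l+1-t)) (b+1+t)) (l+1)]
          simp only [Nat.succ_sub_succ, Nat.sub_zero, Nat.add_zero, qbinom_zero, mul_one]
          rw [← add_assoc]
          congr 1
          · rw [← Finset.sum_add_distrib]
            apply Finset.sum_congr rfl
            intro t ht
            have ht' : t ≤ l := Nat.lt_succ_iff.mp (Finset.mem_range.mp ht)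
            set s := l - t with hs
            have hls : l = t + s := by omega
            have e1 : b + (t+1) = b + 1 + t := by omega
            have e2 : b + 1 + (t + 1) = (b + 1 + t) + 1 := by omega
            rw [e1, e2, ← add_smul, qbinom_succ]
            congr 1
            rw [hls]
            ring
          · have e : b + 1 + 0 = b + 0 + 1 := by omega
            rw [e]
            congr 1
            ring

lemma starPow_eq (qm : I → I → K) (i : I) : ∀ n : ℕ,
    starPow qm i n = qfact (qm i i) n • repE K i n := by
  intro n
  induction n with
  | zero =>
      rw [starPow, show qfact (qm i i) 0 = 1 from Finset.prod_range_zero _, one_smul]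
      rfl
  | succ n IH =>
      rw [starPow, IH, shuffle_smul_left, repE, wgen, shuffle_single_single]
      simp only [FreeMonoid.toList_ofList, FreeMonoid.toList_of, List.reverse_replicate,
        List.reverse_singleton, one_mul, one_smul]
      rw [show ([i] : List I) = List.replicate 1 i from rfl, shAux_pure qm i n 1,
        qbinom_one, smul_smul, ← qfact_succ]

lemma rev_word (i j : I) (a b : ℕ) :
    (List.replicate a i ++ j :: List.replicate b i).reverse
      = List.replicate b i ++ j :: List.replicate a i := by
  simp [List.reverse_append, List.reverse_replicate, List.append_assoc,
    List.replicate_succ']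


theorem shuffle_power_formula_aux (qm : I → I → K) (i j : I)
    (m l : ℕ) :
    shuffle qm (shuffle qm (starPow qm i m) (wgen K j)) (starPow qm i l)
      = ∑ k ∈ Finset.range (m + 1), ∑ t ∈ Finset.range (l + 1),
          (qm i j ^ k * qm j i ^ (l - t) * qm i i ^ (k * (l - t)) *
              qbinom (qm i i) m k * qbinom (qm i i) l t *
              qfact (qm i i) (m - k + (l - t)) * qfact (qm i i) (k + t)) •
            MonoidAlgebra.single
              (FreeMonoid.ofList
                (List.replicate (m - k + (l - t)) i ++ j :: List.replicate (k + t) i)) 1 := by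
  rw [starPow_eq qm i m, starPow_eq qm i l, shuffle_smul_left, repE, wgen,
    shuffle_single_single]
  simp only [FreeMonoid.toList_ofList, FreeMonoid.toList_of, List.reverse_replicate,
    List.reverse_singleton, one_mul, one_smul]
  rw [shAux_mjl qm i j m, shuffle_smul_left, shuffle_smul_right, shuffle_sum_left]
  simp only [shuffle_smul_left, wW, repE, shuffle_single_single, FreeMonoid.toList_ofList,
    List.reverse_replicate, rev_word, one_mul, one_smul]
  simp only [shAux_main qm i j, Finset.smul_sum, smul_smul, wW]
  apply Finset.sum_congr rfl
  intro k hk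
  apply Finset.sum_congr rfl
  intro t ht
  congr 1
  have hk' : k ≤ m := Nat.lt_succ_iff.mp (Finset.mem_range.mp hk)
  have ht' : t ≤ l := Nat.lt_succ_iff.mp (Finset.mem_range.mp ht)
  have h1 := qbinom_mul_qfact (qm i i) m k hk'
  have h2 := qbinom_mul_qfact (qm i i) l t ht'
  have h3 := qbinom_mul_qfact (qm i i) (k+t) t (Nat.le_add_left _ _)
  rw [Nat.add_sub_cancel] at h3
  have h4 := qbinom_mul_qfact (qm i i) ((m-k)+(l-t)) (l-t) (Nat.le_add_left _ _)
  rw [Nat.add_sub_cancel] at h4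
  rw [← h1, ← h2, ← h3, ← h4]
  ring

/-- in the quantum shuffle algebra, for `i ≠ j` and `m, l ≥ 0`,
`w_i^{⋆m} ⋆ w_j ⋆ w_i^{⋆l} = ∑_{k=0}^m ∑_{t=0}^l q_{ij}^k q_{ji}^{l-t} q_{ii}^{k(l-t)}
binom(m,k)_{q_{ii}} binom(l,t)_{q_{ii}} (m-k+l-t)_{q_{ii}}! (k+t)_{q_{ii}}! ·
w_i^{m-k+l-t} w_j w_i^{k+t}` (products without `⋆` are concatenations). -/
theorem shuffle_power_formula (qm : I → I → K) (i j : I) (hij : i ≠ j)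
    (m l : ℕ) :
    shuffle qm (shuffle qm (starPow qm i m) (wgen K j)) (starPow qm i l)
      = ∑ k ∈ Finset.range (m + 1), ∑ t ∈ Finset.range (l + 1),
          (qm i j ^ k * qm j i ^ (l - t) * qm i i ^ (k * (l - t)) *
              qbinom (qm i i) m k * qbinom (qm i i) l t *
              qfact (qm i i) (m - k + (l - t)) * qfact (qm i i) (k + t)) •
            MonoidAlgebra.single
              (FreeMonoid.ofList
                (List.replicate (m - k + (l - t)) i ++ j :: List.replicate (k + t) i)) 1 := by
  exact shuffle_power_formula_aux qm i j m l
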